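/- Let g and h be g-functions on the full shift Σ. For i ∈ S and x, y ∈ Σ set F(i,x,y) = min(g(ix), h(iy)), Δ(x,y) = 1 − Σ_{i∈S} F(i,x,y), and define G(ix,iy) = F(i,x,y), and for i ≠ j, G(ix,jy) = (g(ix) − F(i,x,y))⁺ (h(jy) − F(j,x,y))⁺ / Δ(x,y) when Δ(x,y) > 0 and G(ix,jy) = 0 when Δ(x,y) = 0. Define the Markov operator T on Borel probability measures on Σ×Σ by (Tm)(B) = ∫ Σ_{i,j∈S} G(ix,jy) 1_B(ix,jy) dm(x,y) for Borel B ⊆ Σ×Σ. Then for every m and every bounded continuous f : Σ → ℝ, ∫_{Σ×Σ} f∘π₁ d(Tm) = ∫_Σ (L_g f) d((π₁)_* m) and ∫_{Σ×Σ} f∘π₂ d(Tm) = ∫_Σ (L_h f) d((π₂)_* m). In particular, if (π₁)_* m = ν_g and (π₂)_* m = ν_h where ν_g is a g-measure for g and ν_h is a g-measure for h, then (π₁)_*(Tm) = ν_g and (π₂)_*(Tm) = ν_h. -/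

import Mathlib

open MeasureTheory Filter Topology
open scoped ENNReal NNReal

variable {S : Type} [Countable S] [Infinite S]
  [TopologicalSpace S] [DiscreteTopology S]
  [MeasurableSpace S] [BorelSpace S]

def cons (i : S) (x : ℕ → S) : ℕ → S := fun n => Nat.casesOn n i x

def shift (x : ℕ → S) : ℕ → S := fun n => x (n + 1)

def IsGFunction (g : (ℕ → S) → ℝ) : Prop :=
  Continuous g ∧ (∀ x, g x ∈ Set.Ioc (0:ℝ) 1) ∧ ∀ x, HasSum (fun i : S => g (cons i x)) 1

def IsGMeasure (g : (ℕ → S) → ℝ) (μ : Measure (ℕ → S)) : Prop :=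
  IsProbabilityMeasure μ ∧ μ.map shift = μ ∧
    ∀ f : BoundedContinuousFunction (ℕ → S) ℝ,
      ∫ x, (∑' i : S, g (cons i x) * f (cons i x)) ∂μ = ∫ x, f x ∂μ

def IsJoining (ν₁ ν₂ : Measure (ℕ → S)) (μ : Measure ((ℕ → S) × (ℕ → S))) : Prop :=
  IsProbabilityMeasure μ ∧ μ.map (Prod.map shift shift) = μ ∧
    μ.map Prod.fst = ν₁ ∧ μ.map Prod.snd = ν₂

noncomputable def dbar (ν₁ ν₂ : Measure (ℕ → S)) : ℝ≥0∞ :=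
  ⨅ (μ : Measure ((ℕ → S) × (ℕ → S))) (_ : IsJoining ν₁ ν₂ μ),
    μ {p | p.1 0 ≠ p.2 0}

noncomputable def eVar (g : (ℕ → S) → ℝ) (n : ℕ) : ℝ≥0∞ :=
  ⨆ (x : ℕ → S) (y : ℕ → S) (_ : ∀ i < n, x i = y i),
    edist (Real.log (g x)) (Real.log (g y))

noncomputable def eDist (g h : (ℕ → S) → ℝ) : ℝ≥0∞ :=
  ⨆ x : ℕ → S, edist (Real.log (g x)) (Real.log (h x))

noncomputable def expNeg (v : ℝ≥0∞) : ℝ≥0∞ :=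
  if v = ∞ then 0 else ENNReal.ofReal (Real.exp (-v.toReal))

open BoundedContinuousFunction
set_option linter.unusedSectionVars false

lemma measurable_cons (i : S) : Measurable (cons i : (ℕ → S) → (ℕ → S)) := by
  apply measurable_pi_lambda
  intro n
  cases n with
  | zero => exact measurable_const
  | succ k => exact measurable_pi_apply k

section RowCol

variable {g h : (ℕ → S) → ℝ}

lemma Δ_nonneg (hg : IsGFunction g) (hh : IsGFunction h)
    {F : S → (ℕ → S) → (ℕ → S) → ℝ}
    (hF : ∀ i x y, F i x y = min (g (cons i x)) (h (cons i y)))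
    {Δ : (ℕ → S) → (ℕ → S) → ℝ}
    (hΔ : ∀ x y, Δ x y = 1 - ∑' i : S, F i x y)
    (x y : ℕ → S) : 0 ≤ Δ x y := by
  have hSa : HasSum (fun k : S => g (cons k x)) 1 := hg.2.2 x
  have hFa : ∀ k, F k x y ≤ g (cons k x) := fun k => by rw [hF]; exact min_le_left _ _
  have hF0 : ∀ k, 0 ≤ F k x y := fun k => by
    rw [hF]; exact le_min (hg.2.1 _).1.le (hh.2.1 _).1.le
  have hSF : Summable fun k => F k x y := Summable.of_nonneg_of_le hF0 hFa hSa.summable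
  have hSda : HasSum (fun k => g (cons k x) - F k x y) (Δ x y) := by
    rw [hΔ]; exact hSa.sub hSF.hasSum
  have : 0 ≤ ∑' k, (g (cons k x) - F k x y) := tsum_nonneg (fun k => sub_nonneg.2 (hFa k))
  rwa [hSda.tsum_eq] at this

lemma G_rowsum (hg : IsGFunction g) (hh : IsGFunction h)
    {F : S → (ℕ → S) → (ℕ → S) → ℝ}
    (hF : ∀ i x y, F i x y = min (g (cons i x)) (h (cons i y)))
    {Δ : (ℕ → S) → (ℕ → S) → ℝ}
    (hΔ : ∀ x y, Δ x y = 1 - ∑' i : S, F i x y)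
    {G : S → S → (ℕ → S) → (ℕ → S) → ℝ}
    (hGdiag : ∀ i x y, G i i x y = F i x y)
    (hGoff : ∀ i j x y, i ≠ j →
      G i j x y = if Δ x y = 0 then 0 else
        max (g (cons i x) - F i x y) 0 * max (h (cons j y) - F j x y) 0 / Δ x y)
    (x y : ℕ → S) (i : S) :
    HasSum (fun j => G i j x y) (g (cons i x)) := by
  classical
  have hSa : HasSum (fun k : S => g (cons k x)) 1 := hg.2.2 x
  have hSb : HasSum (fun k : S => h (cons k y)) 1 := hh.2.2 y
  have hFa : ∀ k, F k x y ≤ g (cons k x) := fun k => by rw [hF]; exact min_le_left _ _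
  have hFb : ∀ k, F k x y ≤ h (cons k y) := fun k => by rw [hF]; exact min_le_right _ _
  have hF0 : ∀ k, 0 ≤ F k x y := fun k => by
    rw [hF]; exact le_min (hg.2.1 _).1.le (hh.2.1 _).1.le
  have hSF : Summable fun k => F k x y := Summable.of_nonneg_of_le hF0 hFa hSa.summable
  have hSda : HasSum (fun k => g (cons k x) - F k x y) (Δ x y) := by
    rw [hΔ]; exact hSa.sub hSF.hasSum
  have hSdb : HasSum (fun k => h (cons k y) - F k x y) (Δ x y) := by
    rw [hΔ]; exact hSb.sub hSF.hasSum
  have hmin : ∀ k, (g (cons k x) - F k x y) * (h (cons k y) - F k x y) = 0 := fun k => by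
    rcases le_total (g (cons k x)) (h (cons k y)) with hk | hk
    · have hFe : F k x y = g (cons k x) := by rw [hF]; exact min_eq_left hk
      rw [hFe]; ring
    · have hFe : F k x y = h (cons k y) := by rw [hF]; exact min_eq_right hk
      rw [hFe]; ring
  by_cases hc : Δ x y = 0
  · have h0 : HasSum (fun k => g (cons k x) - F k x y) 0 := hc ▸ hSda
    have hz : ∀ k, g (cons k x) - F k x y = 0 := fun k =>
      congrFun ((hasSum_zero_iff_of_nonneg (fun k => sub_nonneg.2 (hFa k))).1 h0) k
    have heq : (fun j => G i j x y) = fun j => if j = i then g (cons i x) else 0 := by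
      funext j
      by_cases hj : j = i
      · subst hj; rw [hGdiag, if_pos rfl]; have := hz j; linarith
      · rw [hGoff i j x y (fun e => hj e.symm), if_neg hj, if_pos hc]
    rw [heq]
    exact hasSum_ite_eq i (g (cons i x))
  · have hbase : HasSum
        (fun j => (g (cons i x) - F i x y) * (h (cons j y) - F j x y) / Δ x y)
        (g (cons i x) - F i x y) := by
      have h1 := (hSdb.mul_left (g (cons i x) - F i x y)).mul_right (Δ x y)⁻¹
      have h2 : (g (cons i x) - F i x y) * Δ x y * (Δ x y)⁻¹ = g (cons i x) - F i x y := by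
        field_simp
      rw [h2] at h1
      simpa [div_eq_mul_inv] using h1
    have hupd := hbase.update i (F i x y)
    have hbi : (g (cons i x) - F i x y) * (h (cons i y) - F i x y) / Δ x y = 0 := by
      rw [hmin i, zero_div]
    have heq : Function.update
        (fun j => (g (cons i x) - F i x y) * (h (cons j y) - F j x y) / Δ x y) i (F i x y)
        = fun j => G i j x y := by
      funext j
      rw [Function.update_apply]
      by_cases hj : j = i
      · rw [if_pos hj, hj, hGdiag]
      · rw [if_neg hj, hGoff i j x y (fun e => hj e.symm), if_neg hc,
          max_eq_left (sub_nonneg.2 (hFa i)), max_eq_left (sub_nonneg.2 (hFb j))]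
    rw [heq] at hupd
    have hval : F i x y - (g (cons i x) - F i x y) * (h (cons i y) - F i x y) / Δ x y
        + (g (cons i x) - F i x y) = g (cons i x) := by
      rw [hbi]; ring
    rwa [hval] at hupd

lemma G_colsum (hg : IsGFunction g) (hh : IsGFunction h)
    {F : S → (ℕ → S) → (ℕ → S) → ℝ}
    (hF : ∀ i x y, F i x y = min (g (cons i x)) (h (cons i y)))
    {Δ : (ℕ → S) → (ℕ → S) → ℝ}
    (hΔ : ∀ x y, Δ x y = 1 - ∑' i : S, F i x y)
    {G : S → S → (ℕ → S) → (ℕ → S) → ℝ}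
    (hGdiag : ∀ i x y, G i i x y = F i x y)
    (hGoff : ∀ i j x y, i ≠ j →
      G i j x y = if Δ x y = 0 then 0 else
        max (g (cons i x) - F i x y) 0 * max (h (cons j y) - F j x y) 0 / Δ x y)
    (x y : ℕ → S) (j : S) :
    HasSum (fun i => G i j x y) (h (cons j y)) := by
  classical
  have hSa : HasSum (fun k : S => g (cons k x)) 1 := hg.2.2 x
  have hSb : HasSum (fun k : S => h (cons k y)) 1 := hh.2.2 y
  have hFa : ∀ k, F k x y ≤ g (cons k x) := fun k => by rw [hF]; exact min_le_left _ _
  have hFb : ∀ k, F k x y ≤ h (cons k y) := fun k => by rw [hF]; exact min_le_right _ _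
  have hF0 : ∀ k, 0 ≤ F k x y := fun k => by
    rw [hF]; exact le_min (hg.2.1 _).1.le (hh.2.1 _).1.le
  have hSF : Summable fun k => F k x y := Summable.of_nonneg_of_le hF0 hFa hSa.summable
  have hSda : HasSum (fun k => g (cons k x) - F k x y) (Δ x y) := by
    rw [hΔ]; exact hSa.sub hSF.hasSum
  have hSdb : HasSum (fun k => h (cons k y) - F k x y) (Δ x y) := by
    rw [hΔ]; exact hSb.sub hSF.hasSum
  have hmin : ∀ k, (g (cons k x) - F k x y) * (h (cons k y) - F k x y) = 0 := fun k => by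
    rcases le_total (g (cons k x)) (h (cons k y)) with hk | hk
    · have hFe : F k x y = g (cons k x) := by rw [hF]; exact min_eq_left hk
      rw [hFe]; ring
    · have hFe : F k x y = h (cons k y) := by rw [hF]; exact min_eq_right hk
      rw [hFe]; ring
  by_cases hc : Δ x y = 0
  · have h0 : HasSum (fun k => h (cons k y) - F k x y) 0 := hc ▸ hSdb
    have hz : ∀ k, h (cons k y) - F k x y = 0 := fun k =>
      congrFun ((hasSum_zero_iff_of_nonneg (fun k => sub_nonneg.2 (hFb k))).1 h0) k
    have heq : (fun i => G i j x y) = fun i => if i = j then h (cons j y) else 0 := by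
      funext i
      by_cases hi : i = j
      · subst hi; rw [hGdiag, if_pos rfl]; have := hz i; linarith
      · rw [hGoff i j x y hi, if_neg hi, if_pos hc]
    rw [heq]
    exact hasSum_ite_eq j (h (cons j y))
  · have hbase : HasSum
        (fun i => (g (cons i x) - F i x y) * (h (cons j y) - F j x y) / Δ x y)
        (h (cons j y) - F j x y) := by
      have h1 := (hSda.mul_right (h (cons j y) - F j x y)).mul_right (Δ x y)⁻¹
      have h2 : Δ x y * (h (cons j y) - F j x y) * (Δ x y)⁻¹ = h (cons j y) - F j x y := by
        field_simp
        try ring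
      rw [h2] at h1
      simpa [div_eq_mul_inv] using h1
    have hupd := hbase.update j (F j x y)
    have hbj : (g (cons j x) - F j x y) * (h (cons j y) - F j x y) / Δ x y = 0 := by
      rw [hmin j, zero_div]
    have heq : Function.update
        (fun i => (g (cons i x) - F i x y) * (h (cons j y) - F j x y) / Δ x y) j (F j x y)
        = fun i => G i j x y := by
      funext i
      rw [Function.update_apply]
      by_cases hi : i = j
      · rw [if_pos hi, hi, hGdiag]
      · rw [if_neg hi, hGoff i j x y hi, if_neg hc,
          max_eq_left (sub_nonneg.2 (hFa i)), max_eq_left (sub_nonneg.2 (hFb j))]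
    rw [heq] at hupd
    have hval : F j x y - (g (cons j x) - F j x y) * (h (cons j y) - F j x y) / Δ x y
        + (h (cons j y) - F j x y) = h (cons j y) := by
      rw [hbj]; ring
    rwa [hval] at hupd

lemma G_nonneg (hg : IsGFunction g) (hh : IsGFunction h)
    {F : S → (ℕ → S) → (ℕ → S) → ℝ}
    (hF : ∀ i x y, F i x y = min (g (cons i x)) (h (cons i y)))
    {Δ : (ℕ → S) → (ℕ → S) → ℝ}
    (hΔ : ∀ x y, Δ x y = 1 - ∑' i : S, F i x y)
    {G : S → S → (ℕ → S) → (ℕ → S) → ℝ}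
    (hGdiag : ∀ i x y, G i i x y = F i x y)
    (hGoff : ∀ i j x y, i ≠ j →
      G i j x y = if Δ x y = 0 then 0 else
        max (g (cons i x) - F i x y) 0 * max (h (cons j y) - F j x y) 0 / Δ x y)
    (i j : S) (x y : ℕ → S) : 0 ≤ G i j x y := by
  by_cases hij : i = j
  · subst hij
    rw [hGdiag, hF]
    exact le_min (hg.2.1 _).1.le (hh.2.1 _).1.le
  · rw [hGoff i j x y hij]
    split
    · exact le_refl _
    · exact div_nonneg (mul_nonneg (le_max_right _ _) (le_max_right _ _))
        (Δ_nonneg hg hh hF hΔ x y)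

end RowCol

section Kern

noncomputable def gKernel (g : (ℕ → S) → ℝ) : (ℕ → S) → Measure (ℕ → S) :=
  fun x => Measure.sum (fun i : S => ENNReal.ofReal (g (cons i x)) • Measure.dirac (cons i x))

lemma gKernel_apply (g : (ℕ → S) → ℝ) (x : ℕ → S) {A : Set (ℕ → S)} (hA : MeasurableSet A) :
    gKernel g x A = ∑' i : S, ENNReal.ofReal (g (cons i x)) * A.indicator 1 (cons i x) := by
  rw [gKernel, Measure.sum_apply _ hA]
  refine tsum_congr fun i => ?_
  rw [Measure.smul_apply, Measure.dirac_apply' _ hA, smul_eq_mul]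

lemma measurable_gKernel {g : (ℕ → S) → ℝ} (hgc : Continuous g) :
    Measurable (gKernel g) := by
  apply Measure.measurable_of_measurable_coe
  intro A hA
  simp_rw [gKernel_apply g _ hA]
  refine Measurable.ennreal_tsum fun i => ?_
  exact (ENNReal.measurable_ofReal.comp (hgc.measurable.comp (measurable_cons i))).mul
    ((measurable_const.indicator hA).comp (measurable_cons i))

lemma isProbabilityMeasure_gKernel {g : (ℕ → S) → ℝ} (hg : IsGFunction g) (x : ℕ → S) :
    IsProbabilityMeasure (gKernel g x) := by
  constructor
  rw [gKernel_apply g x MeasurableSet.univ]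
  simp only [Set.indicator_univ, Pi.one_apply, mul_one]
  rw [← ENNReal.ofReal_tsum_of_nonneg (fun i => (hg.2.1 _).1.le) (hg.2.2 x).summable,
    (hg.2.2 x).tsum_eq, ENNReal.ofReal_one]

lemma tsum_ofReal_g {g : (ℕ → S) → ℝ} (hg : IsGFunction g) (x : ℕ → S) :
    ∑' i : S, ENNReal.ofReal (g (cons i x)) = 1 := by
  rw [← ENNReal.ofReal_tsum_of_nonneg (fun i => (hg.2.1 _).1.le) (hg.2.2 x).summable,
    (hg.2.2 x).tsum_eq, ENNReal.ofReal_one]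

lemma integral_gKernel {g : (ℕ → S) → ℝ} (hg : IsGFunction g)
    (f : (ℕ → S) →ᵇ ℝ) (x : ℕ → S) :
    ∫ z, f z ∂(gKernel g x) = ∑' i : S, g (cons i x) * f (cons i x) := by
  have hp : IsProbabilityMeasure (gKernel g x) := isProbabilityMeasure_gKernel hg x
  have hint : Integrable f (gKernel g x) := f.integrable _
  rw [gKernel] at hint ⊢
  rw [integral_sum_measure hint]
  refine tsum_congr fun i => ?_
  rw [integral_smul_measure, integral_dirac' _ _ f.continuous.stronglyMeasurable,
    smul_eq_mul, ENNReal.toReal_ofReal (hg.2.1 _).1.le]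

lemma integral_bind_bcf {Ω : Type} [MeasurableSpace Ω] [TopologicalSpace Ω]
    [OpensMeasurableSpace Ω]
    (μ : Measure Ω) [IsProbabilityMeasure μ] (κ : Ω → Measure Ω) (hκ : Measurable κ)
    (hκp : ∀ x, IsProbabilityMeasure (κ x)) (f : Ω →ᵇ ℝ) :
    ∫ z, f z ∂(μ.bind κ) = ∫ x, ∫ z, f z ∂(κ x) ∂μ := by
  have hfm : Measurable fun z : Ω => ENNReal.ofReal (f z) :=
    ENNReal.measurable_ofReal.comp f.continuous.measurable
  have hfm' : Measurable fun z : Ω => ENNReal.ofReal (-(f z)) :=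
    ENNReal.measurable_ofReal.comp (f.continuous.neg.measurable)
  have hbp : IsProbabilityMeasure (μ.bind κ) := by
    constructor
    rw [Measure.bind_apply MeasurableSet.univ hκ.aemeasurable]
    simp [(hκp _).measure_univ]
  have hint : Integrable f (μ.bind κ) := f.integrable _
  set A : Ω → ℝ≥0∞ := fun x => ∫⁻ z, ENNReal.ofReal (f z) ∂(κ x) with hA
  set B : Ω → ℝ≥0∞ := fun x => ∫⁻ z, ENNReal.ofReal (-(f z)) ∂(κ x) with hB
  have hAm : Measurable A := (Measure.measurable_lintegral hfm).comp hκ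
  have hBm : Measurable B := (Measure.measurable_lintegral hfm').comp hκ
  have hAb : ∀ x, A x ≤ ENNReal.ofReal ‖f‖ := by
    intro x
    calc A x ≤ ∫⁻ _, ENNReal.ofReal ‖f‖ ∂(κ x) := by
          refine lintegral_mono fun z => ENNReal.ofReal_le_ofReal ?_
          exact (Real.le_norm_self _).trans (f.norm_coe_le_norm z)
      _ = ENNReal.ofReal ‖f‖ := by simp [(hκp x).measure_univ]
  have hBb : ∀ x, B x ≤ ENNReal.ofReal ‖f‖ := by
    intro x
    calc B x ≤ ∫⁻ _, ENNReal.ofReal ‖f‖ ∂(κ x) := by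
          refine lintegral_mono fun z => ENNReal.ofReal_le_ofReal ?_
          refine (Real.le_norm_self _).trans ?_
          rw [norm_neg]; exact f.norm_coe_le_norm z
      _ = ENNReal.ofReal ‖f‖ := by simp [(hκp x).measure_univ]
  have hAfin : ∀ x, A x < ∞ := fun x => (hAb x).trans_lt ENNReal.ofReal_lt_top
  have hBfin : ∀ x, B x < ∞ := fun x => (hBb x).trans_lt ENNReal.ofReal_lt_top
  have hintA : Integrable (fun x => (A x).toReal) μ := by
    refine Integrable.mono' (integrable_const ‖f‖)
      (hAm.ennreal_toReal).aestronglyMeasurable (Eventually.of_forall fun x => ?_)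
    rw [Real.norm_of_nonneg ENNReal.toReal_nonneg]
    exact ENNReal.toReal_le_of_le_ofReal (norm_nonneg f) (hAb x)
  have hintB : Integrable (fun x => (B x).toReal) μ := by
    refine Integrable.mono' (integrable_const ‖f‖)
      (hBm.ennreal_toReal).aestronglyMeasurable (Eventually.of_forall fun x => ?_)
    rw [Real.norm_of_nonneg ENNReal.toReal_nonneg]
    exact ENNReal.toReal_le_of_le_ofReal (norm_nonneg f) (hBb x)
  have hinner : ∀ x, ∫ z, f z ∂(κ x) = (A x).toReal - (B x).toReal := fun x =>
    integral_eq_lintegral_pos_part_sub_lintegral_neg_part (f.integrable _)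
  calc ∫ z, f z ∂(μ.bind κ)
      = (∫⁻ z, ENNReal.ofReal (f z) ∂(μ.bind κ)).toReal
        - (∫⁻ z, ENNReal.ofReal (-(f z)) ∂(μ.bind κ)).toReal :=
        integral_eq_lintegral_pos_part_sub_lintegral_neg_part hint
    _ = (∫⁻ x, A x ∂μ).toReal - (∫⁻ x, B x ∂μ).toReal := by
        rw [Measure.lintegral_bind hκ.aemeasurable hfm.aemeasurable, Measure.lintegral_bind hκ.aemeasurable hfm'.aemeasurable]
    _ = (∫ x, (A x).toReal ∂μ) - (∫ x, (B x).toReal ∂μ) := by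
        rw [integral_toReal hAm.aemeasurable (Eventually.of_forall hAfin),
          integral_toReal hBm.aemeasurable (Eventually.of_forall hBfin)]
    _ = ∫ x, ((A x).toReal - (B x).toReal) ∂μ := (integral_sub hintA hintB).symm
    _ = ∫ x, ∫ z, f z ∂(κ x) ∂μ := by
        refine integral_congr_ae (Eventually.of_forall fun x => ?_)
        exact (hinner x).symm

lemma ext_of_bcf_integral {Ω : Type} [MeasurableSpace Ω] [TopologicalSpace Ω]
    [HasOuterApproxClosed Ω] [BorelSpace Ω]
    (μ ν : Measure Ω) [IsProbabilityMeasure μ] [IsProbabilityMeasure ν]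
    (hint : ∀ f : Ω →ᵇ ℝ, ∫ x, f x ∂μ = ∫ x, f x ∂ν) : μ = ν := by
  refine ext_of_forall_lintegral_eq_of_IsFiniteMeasure fun f => ?_
  have hlt1 : ∫⁻ x, (f x : ℝ≥0∞) ∂μ < ∞ := f.lintegral_lt_top_of_nnreal μ
  have hlt2 : ∫⁻ x, (f x : ℝ≥0∞) ∂ν < ∞ := f.lintegral_lt_top_of_nnreal ν
  rw [← ENNReal.toReal_eq_toReal_iff' hlt1.ne hlt2.ne,
    toReal_lintegral_coe_eq_integral, toReal_lintegral_coe_eq_integral]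
  set fr : Ω →ᵇ ℝ := f.comp NNReal.toReal (LipschitzWith.of_dist_le_mul fun a b => by
    rw [NNReal.dist_eq, Real.dist_eq, NNReal.coe_one, one_mul])
  have : ∀ x, (f x : ℝ) = fr x := fun x => rfl
  simp_rw [this]
  exact hint fr

end Kern

/-- **Lemma (the coupling Markov operator preserves the marginals).**
Let `g, h` be g-functions on the full shift, `F(i,x,y) = min(g(ix),h(iy))`,
`Δ(x,y) = 1 - ∑_i F(i,x,y)`, and let `G` be the coupling kernel (`G(ix,iy) = F(i,x,y)`,
`G(ix,jy) = (g(ix)-F(i,x,y))⁺(h(jy)-F(j,x,y))⁺/Δ(x,y)` for `i ≠ j` when `Δ(x,y) > 0`, and `0`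
when `Δ(x,y) = 0`).  Let `T` be the Markov operator
`(Tm)(B) = ∫ ∑_{i,j} G(ix,jy) 1_B(ix,jy) dm(x,y)`.  Then for every Borel probability measure
`m` on `Σ×Σ` and every bounded continuous `f : Σ → ℝ`,
`∫ f∘π₁ d(Tm) = ∫ L_g f d((π₁)_* m)` and `∫ f∘π₂ d(Tm) = ∫ L_h f d((π₂)_* m)`; in particular,
if `(π₁)_* m = ν_g` and `(π₂)_* m = ν_h` for g-measures `ν_g` of `g` and `ν_h` of `h`, then
`(π₁)_*(Tm) = ν_g` and `(π₂)_*(Tm) = ν_h`. -/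
theorem coupling_operator_preserves_marginals
    (g h : (ℕ → S) → ℝ) (hg : IsGFunction g) (hh : IsGFunction h)
    (F : S → (ℕ → S) → (ℕ → S) → ℝ)
    (hF : ∀ i x y, F i x y = min (g (cons i x)) (h (cons i y)))
    (Δ : (ℕ → S) → (ℕ → S) → ℝ)
    (hΔ : ∀ x y, Δ x y = 1 - ∑' i : S, F i x y)
    (G : S → S → (ℕ → S) → (ℕ → S) → ℝ)
    (hGdiag : ∀ i x y, G i i x y = F i x y)
    (hGoff : ∀ i j x y, i ≠ j →
      G i j x y = if Δ x y = 0 then 0 else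
        max (g (cons i x) - F i x y) 0 * max (h (cons j y) - F j x y) 0 / Δ x y)
    (T : Measure ((ℕ → S) × (ℕ → S)) → Measure ((ℕ → S) × (ℕ → S)))
    (hT : ∀ (m : Measure ((ℕ → S) × (ℕ → S))) (B : Set ((ℕ → S) × (ℕ → S))),
      MeasurableSet B →
      T m B = ∫⁻ p, ∑' (i : S) (j : S), ENNReal.ofReal (G i j p.1 p.2) *
          B.indicator (fun _ => (1 : ℝ≥0∞)) (cons i p.1, cons j p.2) ∂m)
    (m : Measure ((ℕ → S) × (ℕ → S))) (hm : IsProbabilityMeasure m) :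
    (∀ f : BoundedContinuousFunction (ℕ → S) ℝ,
      (∫ p, f p.1 ∂(T m) = ∫ x, ∑' i : S, g (cons i x) * f (cons i x) ∂(m.map Prod.fst)) ∧
      (∫ p, f p.2 ∂(T m) = ∫ y, ∑' j : S, h (cons j y) * f (cons j y) ∂(m.map Prod.snd))) ∧
    (∀ νg νh : Measure (ℕ → S), IsGMeasure g νg → IsGMeasure h νh →
      m.map Prod.fst = νg → m.map Prod.snd = νh →
      (T m).map Prod.fst = νg ∧ (T m).map Prod.snd = νh) := by
  have hrowE : ∀ (x y : ℕ → S) (i : S),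
      ∑' j : S, ENNReal.ofReal (G i j x y) = ENNReal.ofReal (g (cons i x)) := by
    intro x y i
    rw [← ENNReal.ofReal_tsum_of_nonneg
        (fun j => G_nonneg hg hh hF hΔ hGdiag hGoff i j x y)
        (G_rowsum hg hh hF hΔ hGdiag hGoff x y i).summable,
      (G_rowsum hg hh hF hΔ hGdiag hGoff x y i).tsum_eq]
  have hcolE : ∀ (x y : ℕ → S) (j : S),
      ∑' i : S, ENNReal.ofReal (G i j x y) = ENNReal.ofReal (h (cons j y)) := by
    intro x y j
    rw [← ENNReal.ofReal_tsum_of_nonneg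
        (fun i => G_nonneg hg hh hF hΔ hGdiag hGoff i j x y)
        (G_colsum hg hh hF hΔ hGdiag hGoff x y j).summable,
      (G_colsum hg hh hF hΔ hGdiag hGoff x y j).tsum_eq]
  have hTfst : (T m).map Prod.fst = (m.map Prod.fst).bind (gKernel g) := by
    ext A hA
    rw [Measure.map_apply measurable_fst hA, hT m _ (measurable_fst hA),
      Measure.bind_apply hA (measurable_gKernel hg.1).aemeasurable]
    have hφ : Measurable fun x : ℕ → S => gKernel g x A :=
      (Measure.measurable_coe hA).comp (measurable_gKernel hg.1)
    rw [lintegral_map hφ measurable_fst]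
    refine lintegral_congr fun p => ?_
    rw [gKernel_apply g _ hA]
    refine tsum_congr fun i => ?_
    have hind : ∀ j : S,
        (Prod.fst ⁻¹' A).indicator (fun _ => (1:ℝ≥0∞)) (cons i p.1, cons j p.2)
          = A.indicator (fun _ => (1:ℝ≥0∞)) (cons i p.1) := by
      intro j
      by_cases hmem : cons i p.1 ∈ A
      · rw [Set.indicator_of_mem hmem, Set.indicator_of_mem (by exact hmem)]
      · rw [Set.indicator_of_notMem hmem, Set.indicator_of_notMem (by exact hmem)]
    simp_rw [hind]
    rw [ENNReal.tsum_mul_right, hrowE p.1 p.2 i]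
    rfl
  have hTsnd : (T m).map Prod.snd = (m.map Prod.snd).bind (gKernel h) := by
    ext A hA
    rw [Measure.map_apply measurable_snd hA, hT m _ (measurable_snd hA),
      Measure.bind_apply hA (measurable_gKernel hh.1).aemeasurable]
    have hφ : Measurable fun y : ℕ → S => gKernel h y A :=
      (Measure.measurable_coe hA).comp (measurable_gKernel hh.1)
    rw [lintegral_map hφ measurable_snd]
    refine lintegral_congr fun p => ?_
    rw [gKernel_apply h _ hA, ENNReal.tsum_comm]
    refine tsum_congr fun j => ?_
    have hind : ∀ i : S,
        (Prod.snd ⁻¹' A).indicator (fun _ => (1:ℝ≥0∞)) (cons i p.1, cons j p.2)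
          = A.indicator (fun _ => (1:ℝ≥0∞)) (cons j p.2) := by
      intro i
      by_cases hmem : cons j p.2 ∈ A
      · rw [Set.indicator_of_mem hmem, Set.indicator_of_mem (by exact hmem)]
      · rw [Set.indicator_of_notMem hmem, Set.indicator_of_notMem (by exact hmem)]
    simp_rw [hind]
    rw [ENNReal.tsum_mul_right, hcolE p.1 p.2 j]
    rfl
  have hTm_prob : IsProbabilityMeasure (T m) := by
    constructor
    rw [hT m Set.univ MeasurableSet.univ]
    have hone : ∀ p : (ℕ → S) × (ℕ → S),
        (∑' (i : S) (j : S), ENNReal.ofReal (G i j p.1 p.2) *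
          Set.univ.indicator (fun _ => (1:ℝ≥0∞)) (cons i p.1, cons j p.2)) = 1 := by
      intro p
      simp only [Set.indicator_univ, mul_one]
      rw [tsum_congr fun i => hrowE p.1 p.2 i, tsum_ofReal_g hg p.1]
    rw [lintegral_congr hone, lintegral_one, measure_univ]
  haveI := hTm_prob
  haveI : IsProbabilityMeasure (m.map Prod.fst) :=
    Measure.isProbabilityMeasure_map measurable_fst.aemeasurable
  haveI : IsProbabilityMeasure (m.map Prod.snd) :=
    Measure.isProbabilityMeasure_map measurable_snd.aemeasurable
  haveI hpf : IsProbabilityMeasure ((T m).map Prod.fst) :=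
    Measure.isProbabilityMeasure_map measurable_fst.aemeasurable
  haveI hps : IsProbabilityMeasure ((T m).map Prod.snd) :=
    Measure.isProbabilityMeasure_map measurable_snd.aemeasurable
  have key1 : ∀ f : BoundedContinuousFunction (ℕ → S) ℝ,
      ∫ p, f p.1 ∂(T m) = ∫ x, ∑' i : S, g (cons i x) * f (cons i x) ∂(m.map Prod.fst) := by
    intro f
    calc ∫ p, f p.1 ∂(T m)
        = ∫ z, f z ∂((T m).map Prod.fst) :=
          (integral_map measurable_fst.aemeasurable
            f.continuous.measurable.aestronglyMeasurable).symm
      _ = ∫ z, f z ∂((m.map Prod.fst).bind (gKernel g)) := by rw [hTfst]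
      _ = ∫ x, ∫ z, f z ∂(gKernel g x) ∂(m.map Prod.fst) :=
          integral_bind_bcf _ _ (measurable_gKernel hg.1)
            (isProbabilityMeasure_gKernel hg) f
      _ = ∫ x, ∑' i : S, g (cons i x) * f (cons i x) ∂(m.map Prod.fst) :=
          integral_congr_ae (Eventually.of_forall fun x => integral_gKernel hg f x)
  have key2 : ∀ f : BoundedContinuousFunction (ℕ → S) ℝ,
      ∫ p, f p.2 ∂(T m) = ∫ y, ∑' j : S, h (cons j y) * f (cons j y) ∂(m.map Prod.snd) := by
    intro f
    calc ∫ p, f p.2 ∂(T m)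
        = ∫ z, f z ∂((T m).map Prod.snd) :=
          (integral_map measurable_snd.aemeasurable
            f.continuous.measurable.aestronglyMeasurable).symm
      _ = ∫ z, f z ∂((m.map Prod.snd).bind (gKernel h)) := by rw [hTsnd]
      _ = ∫ y, ∫ z, f z ∂(gKernel h y) ∂(m.map Prod.snd) :=
          integral_bind_bcf _ _ (measurable_gKernel hh.1)
            (isProbabilityMeasure_gKernel hh) f
      _ = ∫ y, ∑' j : S, h (cons j y) * f (cons j y) ∂(m.map Prod.snd) :=
          integral_congr_ae (Eventually.of_forall fun y => integral_gKernel hh f y)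
  refine ⟨fun f => ⟨key1 f, key2 f⟩, fun νg νh hGMg hGMh hfst hsnd => ?_⟩
  haveI : IsProbabilityMeasure νg := hGMg.1
  haveI : IsProbabilityMeasure νh := hGMh.1
  constructor
  · refine ext_of_bcf_integral _ _ fun f => ?_
    calc ∫ z, f z ∂((T m).map Prod.fst)
        = ∫ p, f p.1 ∂(T m) :=
          integral_map measurable_fst.aemeasurable
            f.continuous.measurable.aestronglyMeasurable
      _ = ∫ x, ∑' i : S, g (cons i x) * f (cons i x) ∂(m.map Prod.fst) := key1 f
      _ = ∫ x, ∑' i : S, g (cons i x) * f (cons i x) ∂νg := by rw [hfst]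
      _ = ∫ z, f z ∂νg := hGMg.2.2 f
  · refine ext_of_bcf_integral _ _ fun f => ?_
    calc ∫ z, f z ∂((T m).map Prod.snd)
        = ∫ p, f p.2 ∂(T m) :=
          integral_map measurable_snd.aemeasurable
            f.continuous.measurable.aestronglyMeasurable
      _ = ∫ y, ∑' j : S, h (cons j y) * f (cons j y) ∂(m.map Prod.snd) := key2 f
      _ = ∫ y, ∑' j : S, h (cons j y) * f (cons j y) ∂νh := by rw [hsnd]
      _ = ∫ z, f z ∂νh := hGMh.2.2 f
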